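/- Let H : [0,∞)×ℝ^N×ℝ^N → ℝ be measurable in t, continuous in x and convex in p, and suppose there is λ : [0,∞)×ℝ^N → [0,∞), continuous in the second variable, such that |H(t,x,p)−H(t,x,q)| ≤ λ(t,x)|p−q| for all t,x,p,q and |H*(t,x,v)| ≤ λ(t,x) for all v ∈ dom H*(t,x,·). Set F(t,x) := dom H*(t,x,·). Then for every t ∈ [0,∞): F(t,x) is a nonempty, compact, convex subset of ℝ^N for every x; x ↦ F(t,x) is continuous with respect to the Hausdorff metric; and sup_{v∈F(t,x)} |v| ≤ λ(t,x) for every x. -/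

import Mathlib

open MeasureTheory Set Filter Topology

noncomputable section

namespace HJB

/-- `ℝ^n`. -/
abbrev Euc (n : ℕ) : Type := EuclideanSpace ℝ (Fin n)

/-! ### Legendre–Fenchel conjugate (in the last variable) -/

/-- The Legendre–Fenchel conjugate of a real-valued function on `ℝ^N`,
with values in `ℝ ∪ {±∞}` (it is never `⊥`). -/
def conj {N : ℕ} (h : Euc N → ℝ) (v : Euc N) : EReal :=
  ⨆ p : Euc N, (((inner ℝ v p : ℝ) - h p : ℝ) : EReal)

/-- The effective domain of the conjugate. -/
def domConj {N : ℕ} (h : Euc N → ℝ) : Set (Euc N) := {v | conj h v ≠ ⊤}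

/-- The epigraph of the conjugate. -/
def epiConj {N : ℕ} (h : Euc N → ℝ) : Set (Euc N × ℝ) :=
  {q | conj h q.1 ≤ (q.2 : EReal)}

/-- The graph of the conjugate. -/
def gphConj {N : ℕ} (h : Euc N → ℝ) : Set (Euc N × ℝ) :=
  {q | conj h q.1 = (q.2 : EReal)}

/-- `H*(t,x,v)`, the conjugate of a Hamiltonian in the last variable. -/
def Hstar {N : ℕ} (H : ℝ → Euc N → Euc N → ℝ) (t : ℝ) (x v : Euc N) : EReal :=
  conj (H t x) v

/-! ### Integrability classes -/

/-- `φ ∈ L¹([0,∞);ℝ)`. -/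
def MemL1 (φ : ℝ → ℝ) : Prop := IntegrableOn φ (Ici 0)

/-- `c ∈ L¹_loc([0,∞);[0,∞))`. -/
def MemL1loc (c : ℝ → ℝ) : Prop :=
  (∀ t, 0 ≤ c t) ∧ ∀ b : ℝ, IntegrableOn c (Icc 0 b)

/-- The class `𝓛_loc` : nonnegative, locally integrable on `[0,∞)`, with uniformly
small integrals over short subintervals. -/
def MemLloc (k : ℝ → ℝ) : Prop :=
  MemL1loc k ∧ ∀ ε > (0:ℝ), ∃ σ > (0:ℝ), ∀ a b : ℝ, 0 ≤ a → a ≤ b → b - a ≤ σ →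
    (∫ τ in a..b, k τ) ≤ ε

/-! ### Cones -/

/-- The Bouligand tangent cone `T_A(x) = {ζ : liminf_{τ→0+} dist(x+τζ,A)/τ = 0}`. -/
def tangentConeB {F : Type*} [NormedAddCommGroup F] [NormedSpace ℝ F]
    (A : Set F) (x : F) : Set F :=
  {ζ | ∀ ε > (0:ℝ), ∀ δ > (0:ℝ), ∃ τ : ℝ, 0 < τ ∧ τ < δ ∧
    Metric.infDist (x + τ • ζ) A ≤ ε * τ}

/-- The regular normal cone (polar of the tangent cone). -/
def regNormal {N : ℕ} (A : Set (Euc N)) (x : Euc N) : Set (Euc N) :=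
  {ξ | ∀ ζ ∈ tangentConeB A x, (inner ℝ ζ ξ : ℝ) ≤ 0}

/-- The limiting normal cone. -/
def limNormal {N : ℕ} (A : Set (Euc N)) (x : Euc N) : Set (Euc N) :=
  {ξ | ∃ xs ξs : ℕ → Euc N, (∀ n, xs n ∈ A ∧ ξs n ∈ regNormal A (xs n)) ∧
    Tendsto xs atTop (nhds x) ∧ Tendsto ξs atTop (nhds ξ)}

/-- The set `N¹_{y,η}` of unit vectors in closed convex hulls of limiting normal
cones at boundary points near `y`. -/
def N1set {N : ℕ} (A : Set (Euc N)) (y : Euc N) (η : ℝ) : Set (Euc N) :=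
  {n | ‖n‖ = 1 ∧ ∃ x ∈ frontier A ∩ Metric.closedBall y η,
    n ∈ closure (convexHull ℝ (limNormal A x))}

/-- The outward pointing condition (OPC) for a set-valued velocity map `FF`. -/
def OPC {N : ℕ} (A : Set (Euc N)) (FF : ℝ → Euc N → Set (Euc N)) : Prop :=
  ∃ η > (0:ℝ), ∃ r > (0:ℝ), ∃ Mc : ℝ, 0 ≤ Mc ∧
    ∀ᵐ t ∂(volume.restrict (Ici (0:ℝ))), ∀ y : Euc N,
      (∃ z ∈ frontier A, dist y z ≤ η) →
      ∀ v ∈ FF t y, (∀ ε > (0:ℝ), ∃ n ∈ N1set A y η, (inner ℝ n v : ℝ) ≤ ε) →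
        ∃ w ∈ FF t y, dist w v ≤ Mc ∧
          ∀ n ∈ N1set A y η, r ≤ (inner ℝ n w : ℝ) ∧ r ≤ (inner ℝ n (w - v) : ℝ)

/-- `(OPC)_H` : the OPC condition for `dom H*`. -/
def OPCH {N : ℕ} (H : ℝ → Euc N → Euc N → ℝ) (A : Set (Euc N)) : Prop :=
  OPC A (fun t y => domConj (H t y))

/-! ### Conditions (h)'' and (h)''_H -/

/-- The image set `(f,l)(t,x,U(t))`. -/
def flimg {N M : ℕ} (U : ℝ → Set (Euc M)) (f : ℝ → Euc N → Euc M → Euc N)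
    (l : ℝ → Euc N → Euc M → ℝ) (t : ℝ) (x : Euc N) : Set (Euc N × ℝ) :=
  (fun u => (f t x u, l t x u)) '' U t

/-- Condition (h)'' for a control triple `(U,f,l)`, a constraint set `A`, and
data functions `φ ∈ L¹`, `c ∈ L¹_loc`, `k, q ∈ 𝓛_loc`. -/
def Hpp {N M : ℕ} (U : ℝ → Set (Euc M)) (f : ℝ → Euc N → Euc M → Euc N)
    (l : ℝ → Euc N → Euc M → ℝ) (A : Set (Euc N)) (φ c k q : ℝ → ℝ) : Prop :=
  (∀ O : Set (Euc M), IsOpen O → MeasurableSet {t : ℝ | (U t ∩ O).Nonempty}) ∧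
  (∀ t, (U t).Nonempty ∧ IsClosed (U t)) ∧
  -- (h1)
  (∀ x u, Measurable fun t => f t x u) ∧
  (∀ x u, Measurable fun t => l t x u) ∧
  (∀ t, Continuous fun q : Euc N × Euc M => f t q.1 q.2) ∧
  (∀ t, Continuous fun q : Euc N × Euc M => l t q.1 q.2) ∧
  MemL1 φ ∧ (∀ t, 0 ≤ t → ∀ x u, φ t ≤ l t x u) ∧
  -- (h2)
  MemL1loc c ∧
  (∀ t, 0 ≤ t → ∀ x, ∀ u ∈ U t, ‖f t x u‖ + |l t x u| ≤ c t * (1 + ‖x‖)) ∧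
  -- (h3)
  (∀ t, 0 ≤ t → ∀ x, IsClosed (flimg U f l t x) ∧
    Tendsto (fun y => EMetric.hausdorffEdist (flimg U f l t y) (flimg U f l t x))
      (nhds x) (nhds 0)) ∧
  -- (h4)
  (∀ t, 0 ≤ t → ∀ x, Convex ℝ {y : Euc N × ℝ |
    ∃ u ∈ U t, ∃ r : ℝ, 0 ≤ r ∧ y = (f t x u, l t x u + r)}) ∧
  -- (h5)
  MemLloc q ∧
  (∀ t, 0 ≤ t → ∀ x ∈ frontier A, ∀ u ∈ U t, ‖f t x u‖ + |l t x u| ≤ q t) ∧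
  -- (h6)
  MemLloc k ∧
  (∀ t, 0 ≤ t → ∀ x y, ∀ u ∈ U t,
    ‖f t x u - f t y u‖ + |l t x u - l t y u| ≤ k t * ‖x - y‖)

/-- Condition (h)''_H for a Hamiltonian `H`, a constraint set `A`, a function `λ`,
and data functions `φ ∈ L¹`, `c ∈ L¹_loc`, `k, q ∈ 𝓛_loc`. -/
def HppH {N : ℕ} (H : ℝ → Euc N → Euc N → ℝ) (A : Set (Euc N))
    (lam : ℝ → Euc N → ℝ) (φ c k q : ℝ → ℝ) : Prop :=
  -- (H1)
  (∀ x p, Measurable fun t => H t x p) ∧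
  (∀ t p, Continuous fun x => H t x p) ∧
  (∀ t x, ConvexOn ℝ univ (H t x)) ∧
  -- (H2)
  MemL1 φ ∧ (∀ t, 0 ≤ t → ∀ x, H t x 0 ≤ -φ t) ∧
  -- regularity of λ and of the data
  (∀ t x, 0 ≤ lam t x) ∧
  (∀ x, Measurable fun t => lam t x) ∧
  (∀ t, Continuous fun x => lam t x) ∧
  MemL1loc c ∧ MemLloc k ∧ MemLloc q ∧
  -- (H3)
  (∀ t, 0 ≤ t → ∀ x, lam t x ≤ c t * (1 + ‖x‖)) ∧
  (∀ t, 0 ≤ t → ∀ x ∈ frontier A, lam t x ≤ q t) ∧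
  -- (H4)
  (∀ t, 0 ≤ t → ∀ x y, |lam t x - lam t y| ≤ k t * ‖x - y‖) ∧
  -- (H5)
  (∀ t, 0 ≤ t → ∀ x y p, |H t x p - H t y p| ≤ k t * (1 + ‖p‖) * ‖x - y‖) ∧
  -- (H6)
  (∀ t, 0 ≤ t → ∀ x p p', |H t x p - H t x p'| ≤ lam t x * ‖p - p'‖) ∧
  -- (H7)
  (∀ t, 0 ≤ t → ∀ x v, Hstar H t x v ≠ ⊤ → |(Hstar H t x v).toReal| ≤ lam t x)

/-! ### Trajectories and value functions -/

/-- `x` is locally absolutely continuous on `[t₀,∞)` with a.e. derivative `dx`. -/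
def IsTrajOn {N : ℕ} (x dx : ℝ → Euc N) (t₀ : ℝ) : Prop :=
  (∀ b : ℝ, IntegrableOn dx (Icc t₀ b)) ∧
  ∀ t, t₀ ≤ t → x t = x t₀ + ∫ s in t₀..t, dx s

/-- `S_H(t₀,x₀)` : admissible pairs (trajectory, a.e. derivative) for the
calculus-of-variations problem with constraint set `A`. -/
def SH {N : ℕ} (H : ℝ → Euc N → Euc N → ℝ) (A : Set (Euc N)) (t₀ : ℝ)
    (x₀ : Euc N) : Set ((ℝ → Euc N) × (ℝ → Euc N)) :=
  {p | IsTrajOn p.1 p.2 t₀ ∧ p.1 t₀ = x₀ ∧ (∀ t, t₀ ≤ t → p.1 t ∈ A) ∧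
    ∀ᵐ t ∂(volume.restrict (Ici t₀)), Hstar H t (p.1 t) (p.2 t) ≠ ⊤}

open Classical in
/-- The cost `∫_{t₀}^∞ H*(t,x(t),ẋ(t)) dt ∈ ℝ ∪ {+∞}` of a trajectory. -/
def trajCost {N : ℕ} (H : ℝ → Euc N → Euc N → ℝ) (t₀ : ℝ)
    (p : (ℝ → Euc N) × (ℝ → Euc N)) : EReal :=
  if (∀ᵐ t ∂(volume.restrict (Ici t₀)), Hstar H t (p.1 t) (p.2 t) ≠ ⊤) ∧
     IntegrableOn (fun t => (Hstar H t (p.1 t) (p.2 t)).toReal) (Ici t₀)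
  then (((∫ t in Ici t₀, (Hstar H t (p.1 t) (p.2 t)).toReal) : ℝ) : EReal)
  else ⊤

/-- The value function `V` of the calculus-of-variations problem. -/
def valueV {N : ℕ} (H : ℝ → Euc N → Euc N → ℝ) (A : Set (Euc N)) (t₀ : ℝ)
    (x₀ : Euc N) : EReal :=
  sInf (trajCost H t₀ '' SH H A t₀ x₀)

/-- `S_f(t₀,x₀)` : admissible trajectory-control pairs of the control system. -/
def Sf {N M : ℕ} (U : ℝ → Set (Euc M)) (f : ℝ → Euc N → Euc M → Euc N)
    (A : Set (Euc N)) (t₀ : ℝ) (x₀ : Euc N) :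
    Set ((ℝ → Euc N) × (ℝ → Euc M)) :=
  {p | Measurable p.2 ∧ (∀ᵐ t ∂(volume.restrict (Ici t₀)), p.2 t ∈ U t) ∧
    (∀ b : ℝ, IntegrableOn (fun s => f s (p.1 s) (p.2 s)) (Icc t₀ b)) ∧
    p.1 t₀ = x₀ ∧ (∀ t, t₀ ≤ t → p.1 t ∈ A) ∧
    ∀ t, t₀ ≤ t → p.1 t = x₀ + ∫ s in t₀..t, f s (p.1 s) (p.2 s)}

open Classical in
/-- The cost `∫_{t₀}^∞ l(t,x(t),u(t)) dt ∈ ℝ ∪ {+∞}` of a trajectory-control pair. -/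
def ctrlCost {N M : ℕ} (l : ℝ → Euc N → Euc M → ℝ) (t₀ : ℝ)
    (p : (ℝ → Euc N) × (ℝ → Euc M)) : EReal :=
  if IntegrableOn (fun t => l t (p.1 t) (p.2 t)) (Ici t₀)
  then (((∫ t in Ici t₀, l t (p.1 t) (p.2 t)) : ℝ) : EReal)
  else ⊤

/-- The value function `𝒱` of the optimal control problem. -/
def valueVc {N M : ℕ} (U : ℝ → Set (Euc M)) (f : ℝ → Euc N → Euc M → Euc N)
    (l : ℝ → Euc N → Euc M → ℝ) (A : Set (Euc N)) (t₀ : ℝ) (x₀ : Euc N) : EReal :=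
  sInf (ctrlCost l t₀ '' Sf U f A t₀ x₀)

/-! ### Conditions (B), (B)_H, (LB), (VIC) -/

/-- Condition `(B)_H`. -/
def CondBH {N : ℕ} (H : ℝ → Euc N → Euc N → ℝ) (A : Set (Euc N)) : Prop :=
  (∃ t₀ ≥ (0:ℝ), ∃ x₀ ∈ A, valueV H A t₀ x₀ ≠ ⊤) ∧
  ∃ T > (0:ℝ), ∃ ψ : ℝ → ℝ, (∀ t, 0 ≤ ψ t) ∧ IntegrableOn ψ (Ici T) ∧
    ∀ t₀, T ≤ t₀ → ∀ x₀ ∈ A, valueV H A t₀ x₀ ≠ ⊤ →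
      ∀ p ∈ SH H A t₀ x₀,
        ∀ᵐ t ∂(volume.restrict (Ici t₀)), |(Hstar H t (p.1 t) (p.2 t)).toReal| ≤ ψ t

/-- Condition `(B)`. -/
def CondB {N M : ℕ} (U : ℝ → Set (Euc M)) (f : ℝ → Euc N → Euc M → Euc N)
    (l : ℝ → Euc N → Euc M → ℝ) (A : Set (Euc N)) (T : ℝ) (ψ : ℝ → ℝ) : Prop :=
  (∃ t₀ ≥ (0:ℝ), ∃ x₀ ∈ A, valueVc U f l A t₀ x₀ ≠ ⊤) ∧
  0 < T ∧ (∀ t, 0 ≤ ψ t) ∧ IntegrableOn ψ (Ici T) ∧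
    ∀ t₀, T ≤ t₀ → ∀ x₀ ∈ A, valueVc U f l A t₀ x₀ ≠ ⊤ →
      ∀ p ∈ Sf U f A t₀ x₀,
        ∀ᵐ t ∂(volume.restrict (Ici t₀)), |l t (p.1 t) (p.2 t)| ≤ ψ t

/-- Condition (LB), with the family `ψ r` of integrable bounds. -/
def CondLB {N M : ℕ} (U : ℝ → Set (Euc M)) (f : ℝ → Euc N → Euc M → Euc N)
    (l : ℝ → Euc N → Euc M → ℝ) (A : Set (Euc N)) (ψ : ℝ → ℝ → ℝ) : Prop :=
  ∀ r, 0 < r → (∀ t, 0 ≤ ψ r t) ∧ IntegrableOn (ψ r) (Ici 0) ∧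
    ∀ t₀, 0 ≤ t₀ → ∀ x₀ ∈ A, ‖x₀‖ ≤ r → ∀ p ∈ Sf U f A t₀ x₀,
      ∀ᵐ t ∂(volume.restrict (Ici t₀)), |l t (p.1 t) (p.2 t)| ≤ ψ r t

/-- Condition `(VIC)_H`. -/
def VICH {N : ℕ} (H : ℝ → Euc N → Euc N → ℝ) (A : Set (Euc N)) : Prop :=
  ∃ C : Set ℝ, C ⊆ Ioi 0 ∧ volume (Ioi 0 \ C) = 0 ∧
    ∀ t ∈ C, ∀ x ∈ A,
      (∃ v, Hstar H t x v ≠ ⊤ ∧ v ∈ tangentConeB A x) ∧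
      ∀ v, Hstar H t x v ≠ ⊤ → -v ∈ tangentConeB A x

/-- Condition (VIC) for a dynamics `f` with controls `U`. -/
def VICf {N M : ℕ} (U : ℝ → Set (Euc M)) (f : ℝ → Euc N → Euc M → Euc N)
    (A : Set (Euc N)) : Prop :=
  ∃ C : Set ℝ, C ⊆ Ioi 0 ∧ volume (Ioi 0 \ C) = 0 ∧
    ∀ t ∈ C, ∀ x ∈ A,
      (∃ u ∈ U t, f t x u ∈ tangentConeB A x) ∧
      ∀ u ∈ U t, -(f t x u) ∈ tangentConeB A x

/-! ### Weak solutions -/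

/-- The time–state–value space `ℝ × ℝ^N × ℝ`. -/
abbrev TXR (N : ℕ) : Type := ℝ × Euc N × ℝ

/-- The natural pairing on `ℝ × ℝ^N × ℝ`. -/
def pairTX {N : ℕ} (p q : TXR N) : ℝ :=
  p.1 * q.1 + (inner ℝ p.2.1 q.2.1 : ℝ) + p.2.2 * q.2.2

/-- The regular normal cone in `ℝ × ℝ^N × ℝ` (polar of the tangent cone). -/
def regNormalTX {N : ℕ} (S : Set (TXR N)) (z : TXR N) : Set (TXR N) :=
  {ξ | ∀ ζ ∈ tangentConeB S z, pairTX ζ ξ ≤ 0}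

/-- The epigraph of an extended-real function of `(t,x)`. -/
def epiTX {N : ℕ} (W : ℝ → Euc N → EReal) : Set (TXR N) :=
  {z | W z.1 z.2.1 ≤ (z.2.2 : EReal)}

/-- The epigraph of `W(t,·)`. -/
def epiX {N : ℕ} (W : ℝ → Euc N → EReal) (t : ℝ) : Set (Euc N × ℝ) :=
  {q | W t q.1 ≤ (q.2 : EReal)}

/-- The Fréchet subdifferential of `W` at `(t,x)` (only meaningful when `W t x` is finite). -/
def frSubdiff {N : ℕ} (W : ℝ → Euc N → EReal) (t : ℝ) (x : Euc N) :
    Set (ℝ × Euc N) :=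
  {p | ∀ ε > (0:ℝ), ∃ δ > (0:ℝ), ∀ s : ℝ, ∀ y : Euc N,
    dist ((s, y) : ℝ × Euc N) (t, x) < δ →
    ((((W t x).toReal + p.1 * (s - t) + (inner ℝ p.2 (y - x) : ℝ)
      - ε * dist ((s, y) : ℝ × Euc N) (t, x)) : ℝ) : EReal) ≤ W s y}

/-- A lower semicontinuous `W : [0,∞) × A → ℝ ∪ {+∞}` is a weak solution of
`-W_t + H(t,x,-W_x) = 0` on `(0,∞) × A`. -/
def IsWeakSolution {N : ℕ} (H : ℝ → Euc N → Euc N → ℝ) (A : Set (Euc N))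
    (W : ℝ → Euc N → EReal) : Prop :=
  ∃ C : Set ℝ, C ⊆ Ioi 0 ∧ volume (Ioi 0 \ C) = 0 ∧
    (∀ t ∈ C, ∀ x ∈ frontier A, W t x ≠ ⊤ →
      (∀ p ∈ frSubdiff W t x, 0 ≤ -p.1 + H t x (-p.2)) ∧
      (∀ pt : ℝ, ∀ px : Euc N,
        ((pt, px, (0:ℝ)) : TXR N) ∈ regNormalTX (epiTX W) (t, x, (W t x).toReal) →
        ∀ ε > (0:ℝ), ∃ v : Euc N, Hstar H t x v ≠ ⊤ ∧ pt - ε ≤ (inner ℝ v (-px) : ℝ))) ∧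
    (∀ t ∈ C, ∀ x ∈ interior A, W t x ≠ ⊤ →
      (∀ p ∈ frSubdiff W t x, -p.1 + H t x (-p.2) = 0) ∧
      (∀ pt : ℝ, ∀ px : Euc N,
        ((pt, px, (0:ℝ)) : TXR N) ∈ regNormalTX (epiTX W) (t, x, (W t x).toReal) →
        IsLUB {r : ℝ | ∃ v : Euc N, Hstar H t x v ≠ ⊤ ∧ r = (inner ℝ v (-px) : ℝ)} pt))

/-- Local absolute continuity of a set-valued map `t ⇝ P(t)` with nonempty closed
values. -/
def LocAbsCont {F : Type*} [MetricSpace F] (P : ℝ → Set F) : Prop :=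
  (∀ t, 0 ≤ t → (P t).Nonempty ∧ IsClosed (P t)) ∧
  ∀ S T : ℝ, 0 ≤ S → S ≤ T → ∀ ε > (0:ℝ), ∀ K : Set F, IsCompact K →
    ∃ δ > (0:ℝ), ∀ m : ℕ, ∀ s t : ℕ → ℝ,
      (∀ i, i < m → S ≤ s i ∧ s i < t i ∧ t i ≤ T) →
      (∀ i, i + 1 < m → t i ≤ s (i + 1)) →
      (∑ i ∈ Finset.range m, (t i - s i)) < δ →
      ∃ e : ℕ → ℝ,
        (∀ i, i < m → 0 ≤ e i ∧
          (P (t i) ∩ K ⊆ {y | ∃ z ∈ P (s i), dist y z ≤ e i}) ∧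
          (P (s i) ∩ K ⊆ {y | ∃ z ∈ P (t i), dist y z ≤ e i})) ∧
        (∑ i ∈ Finset.range m, e i) < ε

/-! ### The class 𝓗 -/

/-- The rescaled Hamiltonian `IH(t,x,p) := θ(t)⁻¹ H(t,x,θ(t)p)`. -/
def IHam {N : ℕ} (H : ℝ → Euc N → Euc N → ℝ) (θ : ℝ → ℝ) :
    ℝ → Euc N → Euc N → ℝ :=
  fun t x p => (θ t)⁻¹ * H t x (θ t • p)

/-- The `L^∞([0,∞))` norm. -/
def supNormInfty (θ : ℝ → ℝ) : ℝ :=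
  (essSup (fun t => ENNReal.ofReal |θ t|) (volume.restrict (Ici (0:ℝ)))).toReal


/-- The class `𝓗(θ,λ,{ψ_r},φ,c,A)`. -/
def ClassH {N : ℕ} (H : ℝ → Euc N → Euc N → ℝ) (θ : ℝ → ℝ)
    (lam : ℝ → Euc N → ℝ) (ψ : ℝ → ℝ → ℝ) (φ c : ℝ → ℝ) (A : Set (Euc N)) : Prop :=
  (∀ t, 0 < θ t) ∧ Measurable θ ∧
  essSup (fun t => ENNReal.ofReal |θ t|) (volume.restrict (Ici (0:ℝ))) ≠ ⊤ ∧
  (∀ r, 0 < r → (∀ t, 0 ≤ ψ r t) ∧ IntegrableOn (ψ r) (Ici 0)) ∧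
  (∃ k q : ℝ → ℝ, HppH (IHam H θ) A lam φ c k q) ∧
  ∀ r, 0 < r → ∀ t₀, 0 ≤ t₀ → ∀ x₀ ∈ A, ‖x₀‖ ≤ r →
    ∀ p ∈ SH (IHam H θ) A t₀ x₀,
      ∀ᵐ t ∂(volume.restrict (Ici t₀)), θ t * lam t (p.1 t) ≤ ψ r t

section Aux

variable {N : ℕ} {h : Euc N → ℝ}

lemma coe_sub_le_conj (v p : Euc N) : (((inner ℝ v p : ℝ) - h p : ℝ) : EReal) ≤ conj h v :=
  le_iSup (fun p => (((inner ℝ v p : ℝ) - h p : ℝ) : EReal)) p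

lemma conj_ne_bot (v : Euc N) : conj h v ≠ ⊥ :=
  fun hb => absurd (hb ▸ coe_sub_le_conj v 0) (by simp)

lemma conj_le_coe_iff {v : Euc N} {c : ℝ} :
    conj h v ≤ (c : EReal) ↔ ∀ p, (inner ℝ v p : ℝ) - h p ≤ c := by
  rw [conj, iSup_le_iff]
  exact forall_congr' fun p => EReal.coe_le_coe_iff

lemma mem_domConj_of_le {v : Euc N} {c : ℝ} (H : conj h v ≤ (c : EReal)) :
    v ∈ domConj h := by
  intro htop
  rw [htop] at H
  exact absurd H (by simp)

/-- existence of a subgradient of a finite convex continuous function -/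
lemma exists_subgradient (hconv : ConvexOn ℝ univ h) (hcont : Continuous h)
    (q : Euc N) : ∃ v : Euc N, ∀ p, (inner ℝ v p : ℝ) - h p ≤ (inner ℝ v q : ℝ) - h q := by
  set S : Set (Euc N × ℝ) := {z | h z.1 < z.2} with hS
  have hSopen : IsOpen S := isOpen_lt (hcont.comp continuous_fst) continuous_snd
  have hSconv : Convex ℝ S := by
    intro z hz z' hz' a b ha hb hab
    have := hconv.2 (mem_univ z.1) (mem_univ z'.1) ha hb hab
    have h2 : a • h z.1 + b • h z'.1 < a * z.2 + b * z'.2 := by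
      rcases ha.lt_or_eq with ha' | ha'
      · rcases hb.lt_or_eq with hb' | hb'
        · exact add_lt_add (by simpa using mul_lt_mul_of_pos_left hz ha')
            (by simpa using mul_lt_mul_of_pos_left hz' hb')
        · simp only [← hb', zero_smul, zero_mul, add_zero, smul_eq_mul]
          have : a = 1 := by linarith
          have hz2 : h z.1 < z.2 := hz
          simpa [this] using hz2
      · simp only [← ha', zero_smul, zero_mul, zero_add, smul_eq_mul]
        have : b = 1 := by linarith
        have hz2 : h z'.1 < z'.2 := hz'
        simpa [this] using hz2
    exact lt_of_le_of_lt this h2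
  have hqm : ((q, h q) : Euc N × ℝ) ∉ S := by simp [hS]
  obtain ⟨f, hf⟩ := geometric_hahn_banach_open_point hSconv hSopen hqm
  set c : ℝ := f (0, 1) with hc
  have hfz : ∀ p : Euc N, ∀ r : ℝ, f (p, r) = f (p, 0) + r * c := by
    intro p r
    have : ((p, r) : Euc N × ℝ) = (p, 0) + r • ((0 : Euc N), (1:ℝ)) := by
      simp [Prod.ext_iff]
    rw [this, map_add, f.map_smul]
    simp [hc, smul_eq_mul]
  have hcneg : c < 0 := by
    have h1 : f (q, h q + 1) < f (q, h q) := hf (q, h q + 1) (by simp [hS])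
    rw [hfz q (h q + 1), hfz q (h q)] at h1
    linarith
  have hkey : ∀ p, f (p, 0) + h p * c ≤ f (q, 0) + h q * c := by
    intro p
    have h2 : ∀ ε > (0:ℝ), f (p, 0) + h p * c < f (q, 0) + h q * c + ε := by
      intro ε hε
      have h3 : f (p, h p + ε / (-c)) < f (q, h q) :=
        hf _ (by
          show h p < h p + ε / (-c)
          have : 0 < ε / (-c) := div_pos hε (by linarith)
          linarith)
      rw [hfz p (h p + ε / (-c)), hfz q (h q)] at h3
      have hc0 : c ≠ 0 := ne_of_lt hcneg
      have h4 : (h p + ε / (-c)) * c = h p * c - ε := by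
        rw [add_mul, div_mul_eq_mul_div, div_neg, mul_div_assoc, div_self hc0]
        ring
      rw [h4] at h3
      linarith
    exact le_of_forall_pos_lt_add h2
  set w : Euc N := (InnerProductSpace.toDual ℝ (Euc N)).symm
    (f.comp (ContinuousLinearMap.inl ℝ (Euc N) ℝ)) with hw
  have hwp : ∀ p : Euc N, (inner ℝ w p : ℝ) = f (p, 0) := by
    intro p
    rw [hw, InnerProductSpace.toDual_symm_apply]
    rfl
  refine ⟨(-c)⁻¹ • w, fun p => ?_⟩
  have hkp := hkey p
  rw [← hwp p, ← hwp q] at hkp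
  rw [real_inner_smul_left, real_inner_smul_left]
  have hcpos : 0 < -c := by linarith
  have h5 : (-c)⁻¹ * ((inner ℝ w p : ℝ) + h p * c) ≤ (-c)⁻¹ * ((inner ℝ w q : ℝ) + h q * c) :=
    mul_le_mul_of_nonneg_left hkp (by positivity)
  have e : ∀ a b : ℝ, (-c)⁻¹ * (a + b * c) = (-c)⁻¹ * a - b := by
    intro a b
    have hc0 : c ≠ 0 := ne_of_lt hcneg
    field_simp
    ring
  rw [e, e] at h5
  exact h5


lemma conj_eq_of_subgradient {v q : Euc N}
    (hsub : ∀ p, (inner ℝ v p : ℝ) - h p ≤ (inner ℝ v q : ℝ) - h q) :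
    conj h v = (((inner ℝ v q : ℝ) - h q : ℝ) : EReal) :=
  le_antisymm (conj_le_coe_iff.2 hsub) (coe_sub_le_conj v q)

lemma continuous_of_lip {L : ℝ} (hlip : ∀ p q, |h p - h q| ≤ L * ‖p - q‖) :
    Continuous h := by
  rcases le_or_gt L 0 with hL | hL
  · have : ∀ p q, h p = h q := by
      intro p q
      have h1 := hlip p q
      have h2 : L * ‖p - q‖ ≤ 0 := mul_nonpos_of_nonpos_of_nonneg hL (norm_nonneg _)
      have := abs_nonneg (h p - h q)
      have : |h p - h q| = 0 := le_antisymm (h1.trans h2) this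
      have := abs_eq_zero.1 this
      linarith
    have : h = fun _ => h 0 := funext fun p => this p 0
    rw [this]; exact continuous_const
  · refine (LipschitzWith.of_dist_le_mul (K := ⟨L, hL.le⟩) fun p q => ?_).continuous
    rw [Real.dist_eq, dist_eq_norm]
    exact hlip p q

lemma domConj_nonempty (hconv : ConvexOn ℝ univ h) (hcont : Continuous h) :
    (domConj h).Nonempty := by
  obtain ⟨v, hv⟩ := exists_subgradient hconv hcont 0
  exact ⟨v, mem_domConj_of_le (le_of_eq (conj_eq_of_subgradient hv))⟩

lemma conj_le_of_mem {L : ℝ}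
    (hb : ∀ v, conj h v ≠ ⊤ → |(conj h v).toReal| ≤ L) {v : Euc N}
    (hv : v ∈ domConj h) :
    conj h v ≤ (L : EReal) ∧ ((-L : ℝ) : EReal) ≤ conj h v := by
  have hbot := conj_ne_bot (h := h) v
  have heq : ((conj h v).toReal : EReal) = conj h v := EReal.coe_toReal hv hbot
  obtain ⟨h1, h2⟩ := abs_le.1 (hb v hv)
  constructor
  · rw [← heq]; exact_mod_cast h2
  · rw [← heq]; exact_mod_cast h1

lemma mem_domConj_iff {L : ℝ}
    (hb : ∀ v, conj h v ≠ ⊤ → |(conj h v).toReal| ≤ L) {v : Euc N} :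
    v ∈ domConj h ↔ conj h v ≤ (L : EReal) :=
  ⟨fun hv => (conj_le_of_mem hb hv).1, fun hv => mem_domConj_of_le hv⟩

lemma norm_le_of_mem {L : ℝ} (hL : 0 ≤ L)
    (hlip : ∀ p q, |h p - h q| ≤ L * ‖p - q‖)
    (hb : ∀ v, conj h v ≠ ⊤ → |(conj h v).toReal| ≤ L) {v : Euc N}
    (hv : v ∈ domConj h) : ‖v‖ ≤ L := by
  by_contra hcon
  push_neg at hcon
  have hvpos : 0 < ‖v‖ := hL.trans_lt hcon
  have hle : ∀ p, (inner ℝ v p : ℝ) - h p ≤ L :=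
    conj_le_coe_iff.1 (conj_le_of_mem hb hv).1
  have hLh0 : 0 ≤ L + h 0 := by
    have := hle 0
    simp only [inner_zero_right] at this
    linarith
  set s : ℝ := (L + h 0 + 1) / (‖v‖ * (‖v‖ - L)) with hs
  have hspos : 0 < s := by
    apply div_pos (by linarith)
    exact mul_pos hvpos (by linarith)
  have h1 := hle (s • v)
  have h2 : (inner ℝ v (s • v) : ℝ) = s * (‖v‖ * ‖v‖) := by
    rw [real_inner_smul_right, real_inner_self_eq_norm_mul_norm]
  have h3 : h (s • v) ≤ h 0 + L * (s * ‖v‖) := by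
    have := (abs_le.1 (hlip (s • v) 0)).2
    rw [sub_zero, norm_smul] at this
    simp only [Real.norm_eq_abs, abs_of_pos hspos] at this
    linarith
  have h4 : s * (‖v‖ * (‖v‖ - L)) ≤ L + h 0 := by nlinarith
  rw [hs, div_mul_cancel₀ _ (ne_of_gt (mul_pos hvpos (by linarith)))] at h4
  linarith

lemma lsc_conj : LowerSemicontinuous (conj h) := by
  apply lowerSemicontinuous_iSup
  intro p
  apply Continuous.lowerSemicontinuous
  exact continuous_coe_real_ereal.comp ((continuous_id.inner continuous_const).sub continuous_const)

lemma isClosed_domConj {L : ℝ}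
    (hb : ∀ v, conj h v ≠ ⊤ → |(conj h v).toReal| ≤ L) :
    IsClosed (domConj h) := by
  have : domConj h = conj h ⁻¹' Iic (L : EReal) := by
    ext v
    exact mem_domConj_iff hb
  rw [this]
  exact lsc_conj.isClosed_preimage _

lemma isCompact_domConj {L : ℝ} (hL : 0 ≤ L)
    (hlip : ∀ p q, |h p - h q| ≤ L * ‖p - q‖)
    (hb : ∀ v, conj h v ≠ ⊤ → |(conj h v).toReal| ≤ L) :
    IsCompact (domConj h) := by
  apply Metric.isCompact_of_isClosed_isBounded (isClosed_domConj hb)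
  apply Bornology.IsBounded.subset (Metric.isBounded_closedBall (x := (0 : Euc N)) (r := L))
  intro v hv
  simpa [Metric.mem_closedBall] using norm_le_of_mem hL hlip hb hv

lemma convex_domConj {L : ℝ}
    (hb : ∀ v, conj h v ≠ ⊤ → |(conj h v).toReal| ≤ L) :
    Convex ℝ (domConj h) := by
  intro v₁ hv₁ v₂ hv₂ a b ha hb' hab
  rw [mem_domConj_iff hb, conj_le_coe_iff]
  intro p
  have h1 := conj_le_coe_iff.1 (conj_le_of_mem hb hv₁).1 p
  have h2 := conj_le_coe_iff.1 (conj_le_of_mem hb hv₂).1 p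
  rw [inner_add_left, real_inner_smul_left, real_inner_smul_left]
  have e1 : a * (inner ℝ v₁ p : ℝ) - a * h p ≤ a * L := by nlinarith
  have e2 : b * (inner ℝ v₂ p : ℝ) - b * h p ≤ b * L := by nlinarith
  have e3 : a * L + b * L = L := by rw [← add_mul, hab, one_mul]
  have e4 : a * h p + b * h p = h p := by rw [← add_mul, hab, one_mul]
  linarith


lemma exists_close_of_support {A : Set (Euc N)} (hA : Convex ℝ A) (hAc : IsClosed A)
    (hAne : A.Nonempty) {v : Euc N} {ε : ℝ} (hε : 0 ≤ ε)
    (hsep : ∀ p : Euc N, ∃ w ∈ A, (inner ℝ v p : ℝ) ≤ (inner ℝ w p : ℝ) + ε * ‖p‖) :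
    ∃ w ∈ A, dist v w ≤ ε := by
  obtain ⟨w₀, hw₀, hproj⟩ := exists_norm_eq_iInf_of_complete_convex hAne hAc.isComplete hA v
  have hineq : ∀ w ∈ A, (inner ℝ (v - w₀) (w - w₀) : ℝ) ≤ 0 :=
    (norm_eq_iInf_iff_real_inner_le_zero hA hw₀).1 hproj
  refine ⟨w₀, hw₀, ?_⟩
  set p : Euc N := v - w₀ with hp
  obtain ⟨w, hw, hwle⟩ := hsep p
  have h1 : (inner ℝ w p : ℝ) ≤ (inner ℝ w₀ p : ℝ) := by
    have h2 := hineq w hw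
    have h3 : (inner ℝ p (w - w₀) : ℝ) = (inner ℝ w p : ℝ) - (inner ℝ w₀ p : ℝ) := by
      rw [inner_sub_right, real_inner_comm p w, real_inner_comm p w₀]
    linarith
  have h4 : ‖p‖ ^ 2 ≤ ε * ‖p‖ := by
    have h5 : (inner ℝ v p : ℝ) - (inner ℝ w₀ p : ℝ) = ‖p‖ ^ 2 := by
      rw [← inner_sub_left, ← hp, real_inner_self_eq_norm_sq]
    linarith
  have : dist v w₀ = ‖p‖ := by rw [dist_eq_norm, hp]
  rw [this]
  rcases eq_or_lt_of_le (norm_nonneg p) with h0 | h0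
  · rw [← h0]; exact hε
  · nlinarith

lemma eventually_unif (g : Euc N → Euc N → ℝ) (lg : Euc N → ℝ) (x : Euc N)
    (hcont : ∀ p, Continuous fun y => g y p)
    (hlamcont : Continuous lg) (hlamnn : 0 ≤ lg x)
    (hlip : ∀ (y p p' : Euc N), |g y p - g y p'| ≤ lg y * ‖p - p'‖)
    (R ε : ℝ) (hε : 0 < ε) :
    ∀ᶠ y in 𝓝 x, ∀ q : Euc N, ‖q‖ ≤ R → |g y q - g x q| ≤ ε := by
  set L : ℝ := lg x with hL
  set δ : ℝ := ε / (3 * (L + 1)) with hδ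
  have hδpos : 0 < δ := by positivity
  set B : Set (Euc N) := Metric.closedBall (0 : Euc N) R with hB
  have hBcomp : IsCompact B := isCompact_closedBall _ _
  have hcover : B ⊆ ⋃ q ∈ B, Metric.ball q δ := fun q hq =>
    mem_biUnion hq (Metric.mem_ball_self hδpos)
  obtain ⟨P, hPB, hPfin, hPcov⟩ := hBcomp.elim_finite_subcover_image
    (fun q _ => Metric.isOpen_ball) hcover
  have E1 : ∀ᶠ y in 𝓝 x, lg y < L + 1 :=
    (hlamcont.tendsto x).eventually_lt_const (by linarith)
  have E2 : ∀ᶠ y in 𝓝 x, ∀ qi ∈ P, |g y qi - g x qi| < ε / 3 := by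
    rw [eventually_all_finite hPfin]
    intro qi _
    have hc2 : Continuous fun y => |g y qi - g x qi| :=
      ((hcont qi).sub (continuous_const : Continuous fun _ : Euc N => g x qi)).abs
    have htd := hc2.tendsto x
    rw [sub_self, abs_zero] at htd
    exact htd.eventually_lt_const (by positivity)
  filter_upwards [E1, E2] with y hy1 hy2 q hq
  have hqB : q ∈ B := by simpa [hB] using hq
  obtain ⟨qi, hqiP, hqqi⟩ := mem_iUnion₂.1 (hPcov hqB)
  have hd : ‖q - qi‖ ≤ δ := by
    have := Metric.mem_ball.1 hqqi
    rw [dist_eq_norm] at this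
    exact this.le
  have hb1 : |g y q - g y qi| ≤ (L + 1) * δ := by
    refine (hlip y q qi).trans ?_
    exact mul_le_mul hy1.le hd (norm_nonneg _) (by linarith)
  have hb2 : |g x qi - g x q| ≤ (L + 1) * δ := by
    refine (hlip x qi q).trans ?_
    have : ‖qi - q‖ = ‖q - qi‖ := norm_sub_rev _ _
    rw [this]
    exact mul_le_mul (by linarith) hd (norm_nonneg _) (by linarith)
  have hb3 := (hy2 qi hqiP).le
  have hLδ : (L + 1) * δ = ε / 3 := by
    rw [hδ]
    field_simp
  calc |g y q - g x q| ≤ |g y q - g y qi| + |g y qi - g x qi| + |g x qi - g x q| := by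
        have := abs_add_le (g y q - g y qi) (g y qi - g x qi)
        have := abs_add_le (g y q - g y qi + (g y qi - g x qi)) (g x qi - g x q)
        have e : g y q - g x q = (g y q - g y qi) + (g y qi - g x qi) + (g x qi - g x q) := by ring
        rw [e]
        calc |g y q - g y qi + (g y qi - g x qi) + (g x qi - g x q)|
            ≤ |g y q - g y qi + (g y qi - g x qi)| + |g x qi - g x q| := abs_add_le _ _
          _ ≤ |g y q - g y qi| + |g y qi - g x qi| + |g x qi - g x q| := by
              have := abs_add_le (g y q - g y qi) (g y qi - g x qi)
              linarith
    _ ≤ ε / 3 + ε / 3 + ε / 3 := by rw [← hLδ]; linarith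
    _ = ε := by ring


lemma close_dir {h₁ h₂ : Euc N → ℝ} {L₁ L₂ s ε : ℝ} (hε : 0 ≤ ε)
    (hconv₂ : ConvexOn ℝ univ h₂) (hcont₂ : Continuous h₂)
    (hb₁ : ∀ v, conj h₁ v ≠ ⊤ → |(conj h₁ v).toReal| ≤ L₁)
    (hb₂ : ∀ v, conj h₂ v ≠ ⊤ → |(conj h₂ v).toReal| ≤ L₂)
    (hs : 0 < s)
    (hnear : ∀ q : Euc N, ‖q‖ ≤ s → h₁ q ≤ h₂ q + 1)
    (hsε : L₁ + L₂ + 1 ≤ s * ε) :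
    ∀ v ∈ domConj h₁, ∃ w ∈ domConj h₂, dist v w ≤ ε := by
  intro v hv
  apply exists_close_of_support (convex_domConj hb₂) (isClosed_domConj hb₂)
    (domConj_nonempty hconv₂ hcont₂) hε
  intro p
  by_cases hp : p = 0
  · obtain ⟨w, hw⟩ := domConj_nonempty hconv₂ hcont₂
    exact ⟨w, hw, by simp [hp]⟩
  · have hpn : 0 < ‖p‖ := norm_pos_iff.2 hp
    have hc : 0 < s / ‖p‖ := div_pos hs hpn
    obtain ⟨w, hwsub⟩ := exists_subgradient hconv₂ hcont₂ ((s / ‖p‖) • p)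
    have hwconj := conj_eq_of_subgradient hwsub
    have hwmem : w ∈ domConj h₂ := mem_domConj_of_le (le_of_eq hwconj)
    have hu : ‖(s / ‖p‖) • p‖ = s := by
      rw [norm_smul, Real.norm_eq_abs, abs_of_pos hc, div_mul_cancel₀ _ (ne_of_gt hpn)]
    have h6 := (conj_le_of_mem hb₂ hwmem).2
    rw [hwconj] at h6
    have h6' : -L₂ ≤ (inner ℝ w ((s / ‖p‖) • p) : ℝ) - h₂ ((s / ‖p‖) • p) := by
      exact_mod_cast h6
    have h7 := conj_le_coe_iff.1 (conj_le_of_mem hb₁ hv).1 ((s / ‖p‖) • p)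
    have h8 := hnear _ (le_of_eq hu)
    have hkey : (inner ℝ v ((s / ‖p‖) • p) : ℝ)
        ≤ (inner ℝ w ((s / ‖p‖) • p) : ℝ) + s * ε := by linarith
    rw [real_inner_smul_right, real_inner_smul_right] at hkey
    refine ⟨w, hwmem, ?_⟩
    have heq : s * ε = (s / ‖p‖) * (ε * ‖p‖) := by
      field_simp
    rw [heq, ← mul_add] at hkey
    exact le_of_mul_le_mul_left hkey hc


end Aux

/-- Corollary `wrow-wm`, (M8)–(M10). Under (H1), (H6), (H7),
the sets `F(t,x) = dom H*(t,x,·)` are nonempty compact convex, depend continuously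
on `x` in the Hausdorff metric, and satisfy `‖F(t,x)‖ ≤ λ(t,x)`. -/
theorem stmt_4 {N : ℕ} (H : ℝ → Euc N → Euc N → ℝ) (lam : ℝ → Euc N → ℝ)
    (hmeas : ∀ x p, Measurable fun t => H t x p)
    (hcont : ∀ t p, Continuous fun x => H t x p)
    (hconv : ∀ t x, ConvexOn ℝ univ (H t x))
    (hlamnn : ∀ t x, 0 ≤ lam t x)
    (hlamcont : ∀ t, Continuous fun x => lam t x)
    (hH6 : ∀ t, 0 ≤ t → ∀ (x : Euc N) (p p' : Euc N),
      |H t x p - H t x p'| ≤ lam t x * ‖p - p'‖)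
    (hH7 : ∀ t, 0 ≤ t → ∀ (x v : Euc N), Hstar H t x v ≠ ⊤ →
      |(Hstar H t x v).toReal| ≤ lam t x) :
    ∀ t, 0 ≤ t →
      (∀ x : Euc N, (domConj (H t x)).Nonempty ∧ IsCompact (domConj (H t x)) ∧
        Convex ℝ (domConj (H t x))) ∧
      (∀ x : Euc N, Tendsto
        (fun y => EMetric.hausdorffEdist (domConj (H t y)) (domConj (H t x)))
        (nhds x) (nhds 0)) ∧
      (∀ x : Euc N, ∀ v ∈ domConj (H t x), ‖v‖ ≤ lam t x) := by
  intro t ht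
  have hb : ∀ y : Euc N, ∀ v, conj (H t y) v ≠ ⊤ → |(conj (H t y) v).toReal| ≤ lam t y :=
    fun y v hv => hH7 t ht y v hv
  have hlip : ∀ y : Euc N, ∀ p q, |H t y p - H t y q| ≤ lam t y * ‖p - q‖ :=
    fun y => hH6 t ht y
  have hcY : ∀ y : Euc N, Continuous (H t y) := fun y => continuous_of_lip (hlip y)
  refine ⟨fun x => ⟨domConj_nonempty (hconv t x) (hcY x),
      isCompact_domConj (hlamnn t x) (hlip x) (hb x), convex_domConj (hb x)⟩,
    ?_, fun x v hv => norm_le_of_mem (hlamnn t x) (hlip x) (hb x) hv⟩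
  intro x
  rw [ENNReal.tendsto_nhds_zero]
  intro ε hε
  obtain ⟨ε₀, hε₀pos, hε₀le⟩ : ∃ ε₀ : ℝ, 0 < ε₀ ∧ ENNReal.ofReal ε₀ ≤ ε := by
    rcases eq_or_ne ε ⊤ with rfl | hne
    · exact ⟨1, one_pos, le_top⟩
    · exact ⟨ε.toReal, ENNReal.toReal_pos hε.ne' hne,
        le_of_eq (ENNReal.ofReal_toReal hne)⟩
  have hL : 0 ≤ lam t x := hlamnn t x
  set s : ℝ := (2 * lam t x + 2) / ε₀ with hsdef
  have hspos : 0 < s := by positivity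
  have hsε : s * ε₀ = 2 * lam t x + 2 := div_mul_cancel₀ _ (ne_of_gt hε₀pos)
  have E1 : ∀ᶠ y in 𝓝 x, lam t y < lam t x + 1 :=
    ((hlamcont t).tendsto x).eventually_lt_const (by linarith)
  have E2 : ∀ᶠ y in 𝓝 x, ∀ q : Euc N, ‖q‖ ≤ s → |H t y q - H t x q| ≤ 1 :=
    eventually_unif (fun y p => H t y p) (lam t) x (hcont t) (hlamcont t) hL
      (fun y => hlip y) s 1 one_pos
  filter_upwards [E1, E2] with y hy1 hy2
  refine le_trans ?_ hε₀le
  apply EMetric.hausdorffEdist_le_of_mem_edist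
  · intro v hv
    obtain ⟨w, hw, hd⟩ := close_dir (h₁ := H t y) (h₂ := H t x) hε₀pos.le
      (hconv t x) (hcY x) (hb y) (hb x) hspos
      (fun q hq => by linarith [(abs_le.1 (hy2 q hq)).2])
      (by rw [hsε]; linarith) v hv
    exact ⟨w, hw, by rw [edist_dist]; exact ENNReal.ofReal_le_ofReal hd⟩
  · intro v hv
    obtain ⟨w, hw, hd⟩ := close_dir (h₁ := H t x) (h₂ := H t y) hε₀pos.le
      (hconv t y) (hcY y) (hb x) (hb y) hspos
      (fun q hq => by linarith [(abs_le.1 (hy2 q hq)).1])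
      (by rw [hsε]; linarith) v hv
    exact ⟨w, hw, by rw [edist_dist]; exact ENNReal.ofReal_le_ofReal hd⟩


end HJB
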